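/- Let a ∈ F_q^{[n]×[n]×[n]} be the word with a_{ijl} = nonzero exactly when i + j + l ≡ 0 (mod n) (after any fixed invertible rescaling of coordinates along axes). If a = a₁ + a₂ + a₃ where each a_i is supported so that a₁ has columns along axis 1, etc. (a_i ∈ C^{(i)} for arbitrary codes), then |a₁|₁ + |a₂|₂ + |a₃|₃ ≥ n², where |a_i|_i counts the number of axis-i-parallel lines on which a_i is nonzero. -/

import Mathlib

noncomputable section

open Polynomial

/-- Normalized Hamming weight. -/
def normWt {ι F : Type*} [Fintype ι] [Zero F] (x : ι → F) : ℝ :=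
  (Nat.card {p : ι // x p ≠ 0} : ℝ) / (Fintype.card ι : ℝ)

/-- Normalized Hamming distance from a word to a set of words. -/
def distTo {ι F : Type*} [Fintype ι] [AddGroup F] (x : ι → F) (S : Set (ι → F)) : ℝ :=
  sInf ((fun c => normWt (x - c)) '' S)

/-- Normalized minimum distance of a code. -/
def minDist {ι F : Type*} [Fintype ι] [Zero F] (S : Set (ι → F)) : ℝ :=
  sInf (normWt '' (S \ {0}))

/-- Restriction of a word on a grid to the axis-`i` line through `y`. -/
def lineRestrict {F : Type*} {m : ℕ} {n : Fin m → ℕ}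
    (x : (∀ j, Fin (n j)) → F) (i : Fin m) (y : ∀ j, Fin (n j)) : Fin (n i) → F :=
  fun s => x (Function.update y i s)

/-- `‖x‖_i`: the fraction of axis-`i` parallel lines on which `x` is nonzero. -/
def lineWt {F : Type*} [Zero F] {m : ℕ} {n : Fin m → ℕ}
    (x : (∀ j, Fin (n j)) → F) (i : Fin m) : ℝ :=
  (Nat.card {y : ∀ j, Fin (n j) // lineRestrict x i y ≠ 0} : ℝ) /
    (Fintype.card (∀ j, Fin (n j)) : ℝ)

/-- `C^{(i)}`: words all of whose axis-`i` lines belong to `C i`. -/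
def axisCode {F : Type*} {m : ℕ} {n : Fin m → ℕ}
    (C : ∀ i, Set (Fin (n i) → F)) (i : Fin m) : Set ((∀ j, Fin (n j)) → F) :=
  {x | ∀ y, lineRestrict x i y ∈ C i}

/-- Tensor product code `C₁ ⊗ ⋯ ⊗ C_m`. -/
def prodCode {F : Type*} {m : ℕ} {n : Fin m → ℕ}
    (C : ∀ i, Set (Fin (n i) → F)) : Set ((∀ j, Fin (n j)) → F) :=
  ⋂ i, axisCode C i

/-- Dual code w.r.t. the standard bilinear form. -/
def dualCode {ι F : Type*} [Fintype ι] [CommRing F] (S : Set (ι → F)) : Set (ι → F) :=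
  {x | ∀ c ∈ S, ∑ p, x p * c p = 0}

/-- `C₁ ⊞ ⋯ ⊞ C_m := (C₁^⊥ ⊗ ⋯ ⊗ C_m^⊥)^⊥`. -/
def boxCode {F : Type*} [CommRing F] {m : ℕ} {n : Fin m → ℕ}
    (C : ∀ i, Set (Fin (n i) → F)) : Set ((∀ j, Fin (n j)) → F) :=
  dualCode (prodCode (fun i => dualCode (C i)))

/-- `ρ`-product-expansion of a collection of codes. -/
def productExpanding {F : Type*} [Field F] {m : ℕ} {n : Fin m → ℕ}
    (C : ∀ i, Set (Fin (n i) → F)) (ρ : ℝ) : Prop :=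
  ∀ c ∈ boxCode C, ∃ a : Fin m → ((∀ j, Fin (n j)) → F),
    (∀ i, a i ∈ axisCode C i) ∧ c = ∑ i, a i ∧
      ρ * ∑ i, lineWt (a i) i ≤ normWt c

/-- The product-expansion constant `ρ(𝒞)`. -/
def prodExpConst {F : Type*} [Field F] {m : ℕ} {n : Fin m → ℕ}
    (C : ∀ i, Set (Fin (n i) → F)) : ℝ :=
  sSup {ρ : ℝ | productExpanding C ρ}

/-- Expected distance under the axis-parallel line test `T_m^1`. -/
def lineTestE {F : Type*} [Field F] {m : ℕ} {n : Fin m → ℕ}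
    (C : ∀ i, Set (Fin (n i) → F)) (x : (∀ j, Fin (n j)) → F) : ℝ :=
  (∑ i, (∑ y : ∀ j, Fin (n j), distTo (lineRestrict x i y) (C i)) /
      (Fintype.card (∀ j, Fin (n j)) : ℝ)) / (m : ℝ)

/-- Robustness constant `ρ_r(T_m^1, ⊗𝒞)` of the axis-parallel line test. -/
def lineRobustConst {F : Type*} [Field F] {m : ℕ} {n : Fin m → ℕ}
    (C : ∀ i, Set (Fin (n i) → F)) : ℝ :=
  sSup {α : ℝ | ∀ x, α * distTo x (prodCode C) ≤ lineTestE C x}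

/-- Agreement-testability constant `ρ_a(⊗𝒞)`. -/
def agreeConst {F : Type*} [Field F] {m : ℕ} {n : Fin m → ℕ}
    (C : ∀ i, Set (Fin (n i) → F)) : ℝ :=
  sSup {α : ℝ | ∀ c : Fin m → ((∀ j, Fin (n j)) → F),
    (∀ i, c i ∈ axisCode C i) → ∃ z ∈ prodCode C,
      α * ((∑ i, lineWt (c i - z) i) / (m : ℝ)) ≤
        (∑ i, ∑ j, normWt (c i - c j)) / ((m : ℝ) ^ 2)}

/-- `C^{⊗k}` on the grid `[n]^k`. -/
def tensorPow {F : Type*} {n : ℕ} (C : Set (Fin n → F)) (k : ℕ) :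
    Set ((Fin k → Fin n) → F) :=
  {x | ∀ (i : Fin k) (y : Fin k → Fin n), (fun s => x (Function.update y i s)) ∈ C}

/-- Restriction of a word to the axis-parallel `k`-flat determined by the axes
`e : Fin k ↪ Fin m` and base point `y`. -/
def flatRestrict {F : Type*} {n m k : ℕ} (x : (Fin m → Fin n) → F)
    (e : Fin k ↪ Fin m) (y : Fin m → Fin n) : (Fin k → Fin n) → F :=
  fun z => x (fun j => if h : ∃ l, e l = j then z h.choose else y j)

/-- Expected distance under the axis-parallel `k`-flat test `T_m^k` for `C^{⊗m}`. -/
def flatTestE {F : Type*} [Field F] {n : ℕ} (C : Set (Fin n → F)) (m k : ℕ)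
    (x : (Fin m → Fin n) → F) : ℝ :=
  (∑ e : Fin k ↪ Fin m, ∑ y : Fin m → Fin n,
      distTo (flatRestrict x e y) (tensorPow C k)) /
    ((Fintype.card (Fin k ↪ Fin m) : ℝ) * (Fintype.card (Fin m → Fin n) : ℝ))

/-- Robustness constant `ρ_r(T_m^k, C^{⊗m})`. -/
def flatRobustConst {F : Type*} [Field F] {n : ℕ} (C : Set (Fin n → F)) (m k : ℕ) : ℝ :=
  sSup {α : ℝ | ∀ x : (Fin m → Fin n) → F,
    α * distTo x (tensorPow C m) ≤ flatTestE C m k x}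

/-- The polynomial `Σ aᵢ xⁱ` of a word of length `n`. -/
def wordPoly {F : Type*} [CommSemiring F] {n : ℕ} (a : Fin n → F) : Polynomial F :=
  ∑ i, Polynomial.C (a i) * Polynomial.X ^ (i : ℕ)

/-- The cyclic code of length `n` with check polynomial `p`. -/
def cyclicCode {F : Type*} [CommRing F] (n : ℕ) (p : Polynomial F) : Set (Fin n → F) :=
  {a | (Polynomial.X ^ n - 1) ∣ p * wordPoly a}

/-- Check polynomial `(x-1)(x-ω)⋯(x-ω^{k-1})` of the primitive Reed–Solomon code. -/
def rsCheck {F : Type*} [CommRing F] (k : ℕ) (ω : F) : Polynomial F :=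
  ∏ i ∈ Finset.range k, (Polynomial.X - Polynomial.C (ω ^ i))

/-- The primitive Reed–Solomon evaluation code of degree `< k` at the nonzero points. -/
def evalRS (F : Type*) [Field F] [Fintype F] (k : ℕ) : Set (Fˣ → F) :=
  {c | ∃ p : Polynomial F, p.degree < (k : ℕ) ∧ ∀ a : Fˣ, c a = p.eval (a : F)}

/-- Words on `ι₁ × ι₂` all of whose columns lie in `S`. -/
def colCode {ι₁ ι₂ F : Type*} (S : Set (ι₁ → F)) : Set (ι₁ × ι₂ → F) :=
  {x | ∀ j, (fun i => x (i, j)) ∈ S}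

/-- Words on `ι₁ × ι₂` all of whose rows lie in `S`. -/
def rowCode {ι₁ ι₂ F : Type*} (S : Set (ι₂ → F)) : Set (ι₁ × ι₂ → F) :=
  {x | ∀ i, (fun j => x (i, j)) ∈ S}

/-- The multivariate polynomial `Σ_y x_y ∏ᵢ Xᵢ^{yᵢ}` of a word on the grid `[n]^m`. -/
def wordPolyMv {F : Type*} [CommSemiring F] {m n : ℕ} (x : (Fin m → Fin n) → F) :
    MvPolynomial (Fin m) F :=
  ∑ y : Fin m → Fin n, MvPolynomial.C (x y) * ∏ i, MvPolynomial.X i ^ ((y i : ℕ))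

/-- any decomposition `a = a₁ + a₂ + a₃` of the diagonal word uses
at least `n²` nonzero axis-parallel lines. -/
lemma key_unique {n x x' c : ℕ} (hx : x < n) (hx' : x' < n)
    (h : (x + c) % n = 0) (h' : (x' + c) % n = 0) : x = x' := by
  have d : n ∣ x + c := Nat.dvd_of_mod_eq_zero h
  have d' : n ∣ x' + c := Nat.dvd_of_mod_eq_zero h'
  rcases Nat.le_total x x' with hle | hle
  · have hd : n ∣ (x' + c) - (x + c) := Nat.dvd_sub d' d
    have h0 : (x' + c) - (x + c) = x' - x := by omega
    rw [h0] at hd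
    have := Nat.eq_zero_of_dvd_of_lt hd (by omega)
    omega
  · have hd : n ∣ (x + c) - (x' + c) := Nat.dvd_sub d d'
    have h0 : (x + c) - (x' + c) = x - x' := by omega
    rw [h0] at hd
    have := Nat.eq_zero_of_dvd_of_lt hd (by omega)
    omega

lemma key_exists {n : ℕ} (hn : 0 < n) (j l : ℕ) :
    ((n - (j + l) % n) % n + j + l) % n = 0 := by
  have h1 : ((n - (j + l) % n) % n + j + l) % n
      = ((n - (j + l) % n) + (j + l) % n) % n := by
    conv_rhs => rw [Nat.add_mod]
    rw [Nat.mod_mod_of_dvd _ (dvd_refl n), Nat.add_assoc]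
    conv_lhs => rw [Nat.add_mod]
    rw [Nat.mod_mod_of_dvd _ (dvd_refl n)]
  rw [h1]
  have hr : (j + l) % n < n := Nat.mod_lt _ hn
  have : n - (j + l) % n + (j + l) % n = n := by omega
  rw [this, Nat.mod_self]

theorem stmt_4 {F : Type*} [Field F] {n : ℕ}
    (a a₁ a₂ a₃ : Fin n × Fin n × Fin n → F)
    (hsupp : ∀ p : Fin n × Fin n × Fin n,
      a p ≠ 0 ↔ ((p.1 : ℕ) + (p.2.1 : ℕ) + (p.2.2 : ℕ)) % n = 0)
    (hsum : a = a₁ + a₂ + a₃) :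
    n ^ 2 ≤ Nat.card {q : Fin n × Fin n // ∃ s, a₁ (s, q.1, q.2) ≠ 0}
      + Nat.card {q : Fin n × Fin n // ∃ s, a₂ (q.1, s, q.2) ≠ 0}
      + Nat.card {q : Fin n × Fin n // ∃ s, a₃ (q.1, q.2, s) ≠ 0} := by
  classical
  rcases Nat.eq_zero_or_pos n with hn | hn
  · subst hn; simp
  -- Step 1: n^2 ≤ card of the support of a
  have hS : (n ^ 2 : ℕ) ≤ Nat.card {p : Fin n × Fin n × Fin n // a p ≠ 0} := by
    set g : Fin n × Fin n → {p : Fin n × Fin n × Fin n // a p ≠ 0} :=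
      fun q => ⟨(⟨(n - ((q.1 : ℕ) + (q.2 : ℕ)) % n) % n, Nat.mod_lt _ hn⟩, q.1, q.2),
        (hsupp _).mpr (key_exists hn _ _)⟩ with hg
    have hginj : Function.Injective g := by
      intro q q' h
      have h2 := congrArg (fun z => z.val.2) h
      simp only [hg] at h2
      exact Prod.ext (congrArg Prod.fst h2) (congrArg Prod.snd h2)
    calc (n ^ 2 : ℕ) = Nat.card (Fin n × Fin n) := by
          simp [Nat.card_eq_fintype_card, sq]
      _ ≤ _ := Nat.card_le_card_of_injective g hginj
  -- Step 2: support injects into the disjoint union of lines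
  have hfa : ∀ p : Fin n × Fin n × Fin n, a p ≠ 0 → a₁ p ≠ 0 ∨ a₂ p ≠ 0 ∨ a₃ p ≠ 0 := by
    intro p hp
    by_contra hc
    push_neg at hc
    apply hp
    rw [hsum]
    simp [hc.1, hc.2.1, hc.2.2]
  set A := {q : Fin n × Fin n // ∃ s, a₁ (s, q.1, q.2) ≠ 0}
  set B := {q : Fin n × Fin n // ∃ s, a₂ (q.1, s, q.2) ≠ 0}
  set C := {q : Fin n × Fin n // ∃ s, a₃ (q.1, q.2, s) ≠ 0}
  set f : {p : Fin n × Fin n × Fin n // a p ≠ 0} → A ⊕ B ⊕ C :=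
    fun p =>
      if h1 : a₁ p.1 ≠ 0 then Sum.inl ⟨(p.1.2.1, p.1.2.2), ⟨p.1.1, h1⟩⟩
      else if h2 : a₂ p.1 ≠ 0 then Sum.inr (Sum.inl ⟨(p.1.1, p.1.2.2), ⟨p.1.2.1, h2⟩⟩)
      else Sum.inr (Sum.inr ⟨(p.1.1, p.1.2.1), ⟨p.1.2.2, by
        rcases hfa p.1 p.2 with h | h | h
        · exact absurd h h1
        · exact absurd h h2
        · exact h⟩⟩) with hf
  have hfinj : Function.Injective f := by
    intro p p' h
    have hp := (hsupp p.1).mp p.2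
    have hp' := (hsupp p'.1).mp p'.2
    have hfin : p.1 = p'.1 → p = p' := fun e => Subtype.ext e
    apply hfin
    simp only [hf] at h
    split_ifs at h
    all_goals try (simp at h; done)
    all_goals try (simp at h; done)
    · -- both in A
      have e : ((p.1.2.1, p.1.2.2) : Fin n × Fin n) = (p'.1.2.1, p'.1.2.2) :=
        congrArg Subtype.val (Sum.inl_injective h)
      injection e with e2 e3
      have e1 : (p.1.1 : ℕ) = (p'.1.1 : ℕ) := by
        apply key_unique p.1.1.isLt p'.1.1.isLt
          (c := (p.1.2.1 : ℕ) + (p.1.2.2 : ℕ))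
        · rw [← Nat.add_assoc]; exact hp
        · rw [← Nat.add_assoc, e2, e3]; exact hp'
      exact Prod.ext (Fin.ext e1) (Prod.ext e2 e3)
    · -- both in B
      have e : ((p.1.1, p.1.2.2) : Fin n × Fin n) = (p'.1.1, p'.1.2.2) :=
        congrArg Subtype.val (Sum.inl_injective (Sum.inr_injective h))
      injection e with e1 e3
      have e2 : (p.1.2.1 : ℕ) = (p'.1.2.1 : ℕ) := by
        apply key_unique p.1.2.1.isLt p'.1.2.1.isLt
          (c := (p.1.1 : ℕ) + (p.1.2.2 : ℕ))
        · rw [show (p.1.2.1 : ℕ) + ((p.1.1 : ℕ) + (p.1.2.2 : ℕ))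
            = (p.1.1 : ℕ) + (p.1.2.1 : ℕ) + (p.1.2.2 : ℕ) by omega]; exact hp
        · rw [show (p'.1.2.1 : ℕ) + ((p.1.1 : ℕ) + (p.1.2.2 : ℕ))
            = (p.1.1 : ℕ) + (p'.1.2.1 : ℕ) + (p.1.2.2 : ℕ) by omega, e1, e3]; exact hp'
      exact Prod.ext e1 (Prod.ext (Fin.ext e2) e3)
    · -- both in C
      have e : ((p.1.1, p.1.2.1) : Fin n × Fin n) = (p'.1.1, p'.1.2.1) :=
        congrArg Subtype.val (Sum.inr_injective (Sum.inr_injective h))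
      injection e with e1 e2
      have e3 : (p.1.2.2 : ℕ) = (p'.1.2.2 : ℕ) := by
        apply key_unique p.1.2.2.isLt p'.1.2.2.isLt
          (c := (p.1.1 : ℕ) + (p.1.2.1 : ℕ))
        · rw [show (p.1.2.2 : ℕ) + ((p.1.1 : ℕ) + (p.1.2.1 : ℕ))
            = (p.1.1 : ℕ) + (p.1.2.1 : ℕ) + (p.1.2.2 : ℕ) by omega]; exact hp
        · rw [show (p'.1.2.2 : ℕ) + ((p.1.1 : ℕ) + (p.1.2.1 : ℕ))
            = (p.1.1 : ℕ) + (p.1.2.1 : ℕ) + (p'.1.2.2 : ℕ) by omega, e1, e2]; exact hp'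
      exact Prod.ext e1 (Prod.ext e2 (Fin.ext e3))
  have hcard := Nat.card_le_card_of_injective f hfinj
  rw [Nat.card_sum, Nat.card_sum] at hcard
  omega


end
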